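/- Let F(x,y) = ax² + bxy + cy² be a primitive positive definite integral binary quadratic form of discriminant D = b² - 4ac, and let O be the order of discriminant D in the imaginary quadratic field K = ℚ(√D). Then the ℤ-module [a, (-b + √D)/2] = ℤ·a + ℤ·(-b+√D)/2 is a proper ideal of O. -/

import Mathlib

/-- Let `F(x,y) = ax² + bxy + cy²` be a primitive positive definite integral binary
quadratic form of discriminant `D = b² - 4ac < 0`.  Inside `ℂ` put `√D = i√(-D)`,
let `O = ℤ·1 + ℤ·(D+√D)/2 ⊂ ℂ` be the order of discriminant `D` in
`K = ℚ(√D) = {q + r√D : q, r ∈ ℚ}`, and let `𝔞 = ℤ·a + ℤ·(-b+√D)/2`.  Then `𝔞` is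
a proper ideal of `O`: it is closed under multiplication by elements of `O`, and
`{β ∈ K : β𝔞 ⊆ 𝔞} = O`. -/
theorem stmt_18 (a b c : ℤ) (hprim : Int.gcd (Int.gcd a b) c = 1) (hpos : 0 < a)
    (D : ℤ) (hD : D = b ^ 2 - 4 * a * c) (hDneg : D < 0)
    (sqrtD : ℂ) (hsqrtD : sqrtD = Complex.I * Real.sqrt (-D))
    (O : Set ℂ) (hO : O = {z | ∃ m n : ℤ, z = m + n * (((D : ℂ) + sqrtD) / 2)})
    (A : Set ℂ) (hA : A = {z | ∃ m n : ℤ, z = m * a + n * ((-(b : ℂ) + sqrtD) / 2)}) :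
    (∀ o ∈ O, ∀ x ∈ A, o * x ∈ A) ∧
    {β : ℂ | (∃ q r : ℚ, β = q + r * sqrtD) ∧ ∀ x ∈ A, β * x ∈ A} = O := by
  have hDr : (0:ℝ) < -(D:ℝ) := by
    have : (D:ℝ) < 0 := by exact_mod_cast hDneg
    linarith
  set s : ℝ := Real.sqrt (-(D:ℝ)) with hsdef
  have hs0 : 0 < s := Real.sqrt_pos.mpr hDr
  have hssq : s^2 = -(D:ℝ) := Real.sq_sqrt hDr.le
  have hsC : sqrtD = Complex.I * (s:ℝ) := by rw [hsqrtD]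
  have ht2 : sqrtD^2 = (D:ℂ) := by
    rw [hsC, mul_pow, Complex.I_sq]
    have h1 : ((s:ℂ))^2 = ((s^2 : ℝ) : ℂ) := by push_cast; ring
    rw [h1, hssq]; push_cast; ring
  obtain ⟨k, hk⟩ : ∃ k : ℤ, D + b = 2*k := by
    have he : Even (D + b) := by
      have : D + b = b*(b+1) - 4*a*c := by rw [hD]; ring
      rw [this]
      exact (Int.even_mul_succ_self b).sub ⟨2*a*c, by ring⟩
    obtain ⟨k, hk⟩ := he
    exact ⟨k, by omega⟩
  have hkC : (D:ℂ) + b = 2*k := by exact_mod_cast hk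
  have hDC : (D:ℂ) = b^2 - 4*a*c := by exact_mod_cast hD
  have part1 : ∀ o ∈ O, ∀ x ∈ A, o * x ∈ A := by
    rintro o ho x hx
    rw [hO] at ho; rw [hA] at hx ⊢
    obtain ⟨m, n, rfl⟩ := ho
    obtain ⟨p, q, rfl⟩ := hx
    refine ⟨m*p + n*(p*k - q*c), m*q + n*(p*a + q*(k-b)), ?_⟩
    push_cast
    linear_combination ((n:ℂ)*q/4) * ht2 + ((n:ℂ)*p*a/2 + n*q*(sqrtD - b)/4) * hkC + ((n:ℂ)*q/4) * hDC
  refine ⟨part1, ?_⟩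
  ext β
  simp only [Set.mem_setOf_eq]
  constructor
  · rintro ⟨⟨q, r, hβ⟩, hmul⟩
    have haA : (a:ℂ) ∈ A := by
      rw [hA]; exact ⟨1, 0, by push_cast; ring⟩
    have hτA : ((-(b:ℂ) + sqrtD)/2) ∈ A := by
      rw [hA]; exact ⟨0, 1, by push_cast; ring⟩
    have h1 := hmul _ haA
    have h2 := hmul _ hτA
    rw [hA] at h1 h2
    obtain ⟨m1, n1, h1⟩ := h1
    obtain ⟨m2, n2, h2⟩ := h2
    rw [hβ, hsC] at h1 h2
    rw [Complex.ext_iff] at h1 h2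
    simp [Complex.add_re, Complex.add_im, Complex.mul_re, Complex.mul_im, Complex.div_re, Complex.div_im, Complex.normSq_apply] at h1 h2
    have hsne : s ≠ 0 := hs0.ne'
    have haQ : (a:ℚ) ≠ 0 := Int.cast_ne_zero.mpr hpos.ne'
    have hDQ : (D:ℚ) = b^2 - 4*a*c := by exact_mod_cast hD
    have hkQ : (D:ℚ) + b = 2*k := by exact_mod_cast hk
    -- n1 = 2 r a
    have hn1 : (n1:ℚ) = 2*r*a := by
      have h0 : ((n1:ℝ) - 2*r*a) * s = 0 := by linear_combination (-2:ℝ)*h1.2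
      rcases mul_eq_zero.mp h0 with h0 | h0
      · have : (n1:ℝ) = 2*r*a := by linarith
        exact_mod_cast this
      · exact absurd h0 hsne
    -- m1 = q + r b
    have hm1 : (m1:ℚ) = q + r*b := by
      have hq1 : (q:ℚ)*a = m1*a + n1*(-b/2) := by
        have h11 : ((q*a : ℚ) : ℝ) = ((m1*a + n1*(-b/2) : ℚ) : ℝ) := by push_cast; linarith [h1.1]
        exact_mod_cast h11
      have : (m1:ℚ)*a = (q + r*b)*a := by linear_combination -hq1 + (b:ℚ)/2*hn1
      exact mul_right_cancel₀ haQ this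
    -- n2 = q - r b
    have hn2 : (n2:ℚ) = q - r*b := by
      have h0 : ((n2:ℝ) - (q - r*b)) * s = 0 := by linear_combination (-2:ℝ)*h2.2
      rcases mul_eq_zero.mp h0 with h0 | h0
      · have : (n2:ℝ) = (q:ℝ) - r*b := by linarith
        exact_mod_cast this
      · exact absurd h0 hsne
    -- m2 = -2 r c
    have hm2 : (m2:ℚ) = -2*r*c := by
      have h21 : -(q:ℝ)*b/2 + r*D/2 = m2*a + n2*(-b/2) := by
        linear_combination h2.1 + ((r:ℝ)/2)*hssq
      have hq2 : -(q:ℚ)*b/2 + r*D/2 = m2*a + n2*(-b/2) := by exact_mod_cast h21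
      have : (m2:ℚ)*a = (-2*r*c)*a := by
        linear_combination -hq2 + (b:ℚ)/2*hn2 + (r:ℚ)/2*hDQ
      exact mul_right_cancel₀ haQ this
    -- Bezout
    obtain ⟨x, y, z, hbez⟩ : ∃ x y z : ℤ, a*x + b*y + c*z = 1 := by
      refine ⟨Int.gcdA a b * Int.gcdA (Int.gcd a b : ℤ) c,
        Int.gcdB a b * Int.gcdA (Int.gcd a b : ℤ) c, Int.gcdB (Int.gcd a b : ℤ) c, ?_⟩
      have h1b := Int.gcd_eq_gcd_ab a b
      have h2b := Int.gcd_eq_gcd_ab (Int.gcd a b : ℤ) c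
      rw [hprim] at h2b
      push_cast at h2b
      linear_combination -h2b - Int.gcdA (Int.gcd a b : ℤ) c * h1b
    have hbezQ : (a:ℚ)*x + b*y + c*z = 1 := by exact_mod_cast hbez
    set N : ℤ := n1*x + (m1 - n2)*y + (-m2)*z with hNdef
    have hNQ : (N:ℚ) = 2*r := by
      push_cast [hNdef]
      linear_combination (x:ℚ)*hn1 + (y:ℚ)*hm1 - (y:ℚ)*hn2 - (z:ℚ)*hm2 + 2*(r:ℚ)*hbezQ
    set M : ℤ := m1 - N*k with hMdef
    have hMQ : (M:ℚ) = q - r*D := by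
      push_cast [hMdef]
      linear_combination hm1 - (k:ℚ)*hNQ + (r:ℚ)*hkQ
    rw [hO]
    refine ⟨M, N, ?_⟩
    rw [hβ, hsC]
    have hMC : (M:ℂ) = q - r*D := by exact_mod_cast hMQ
    have hNC : (N:ℂ) = 2*r := by exact_mod_cast hNQ
    rw [← hsC]
    linear_combination (-1:ℂ)*hMC - ((D:ℂ)+sqrtD)/2 * hNC
  · rintro hβO
    rw [hO] at hβO
    obtain ⟨m, n, hβ⟩ := hβO
    refine ⟨⟨(m:ℚ) + n*D/2, (n:ℚ)/2, ?_⟩, fun x hx => part1 β (by rw [hO]; exact ⟨m, n, hβ⟩) x hx⟩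
    rw [hβ]; push_cast; ring
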